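/- Let X, Y, A, Z be finitely-valued random variables with joint pmf p such that (Y, X, Z) forms a Markov chain Y ↔ X ↔ Z and (A, X, Z) forms a Markov chain A ↔ X ↔ Z. Then I(X;(A,Z)) + I(A;Y) − I(X;A) − I(Y;Z) = I(X;(Y,Z)) + I(A;Y) − I(A;Z) − I(X;Y); that is, the DisGenIB objective with α = 0 and β = 1 equals the negative of the DisenIB objective −I(A;Y) − I(X;(Y,Z)) + I(A;Z), up to subtracting the constant I(X;Y). -/

import Mathlib

/-- Mutual information `I(U;V)` of two finitely-valued random variables jointly
distributed according to the pmf `p` (given in curried form), with the convention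
that terms with `p u v = 0` contribute `0` (here automatic, since `0 * log _ = 0`). -/
noncomputable def mutualInfo {α β : Type*} [Fintype α] [Fintype β] (p : α → β → ℝ) : ℝ :=
  ∑ u, ∑ v, p u v * Real.log (p u v / ((∑ v', p u v') * (∑ u', p u' v)))

lemma mutualInfo_congr {α β : Type*} [Fintype α] [Fintype β] {p q : α → β → ℝ}
    (h : ∀ u v, p u v = q u v) : mutualInfo p = mutualInfo q := by
  have : p = q := funext fun u => funext fun v => h u v
  rw [this]

lemma sum_comm3 {α β γ : Type*} [Fintype α] [Fintype β] [Fintype γ] (f : α → β → γ → ℝ) :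
    ∑ a, ∑ b, ∑ c, f a b c = ∑ c, ∑ a, ∑ b, f a b c := by
  calc ∑ a, ∑ b, ∑ c, f a b c = ∑ a, ∑ c, ∑ b, f a b c :=
        Finset.sum_congr rfl fun _ _ => Finset.sum_comm
    _ = ∑ c, ∑ a, ∑ b, f a b c := Finset.sum_comm

lemma log_aux {q qxa qxz qaz qx qa qz : ℝ} (hq : 0 < q) (hxa : 0 < qxa) (hxz : 0 < qxz)
    (haz : 0 < qaz) (hx : 0 < qx) (ha : 0 < qa) (hz : 0 < qz)
    (hM : q * qx = qxa * qxz) :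
    Real.log (q / (qx * qaz))
      = Real.log (qxa / (qx * qa)) + Real.log (qxz / (qx * qz))
        - Real.log (qaz / (qa * qz)) := by
  rw [Real.log_div hq.ne' (by positivity), Real.log_div hxa.ne' (by positivity),
    Real.log_div hxz.ne' (by positivity), Real.log_div haz.ne' (by positivity),
    Real.log_mul hx.ne' haz.ne', Real.log_mul hx.ne' ha.ne',
    Real.log_mul hx.ne' hz.ne', Real.log_mul ha.ne' hz.ne']
  have : Real.log q + Real.log qx = Real.log qxa + Real.log qxz := by
    rw [← Real.log_mul hq.ne' hx.ne', ← Real.log_mul hxa.ne' hxz.ne', hM]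
  linarith

/-- Key lemma: if `A ↔ X ↔ Z` is a Markov chain then
`I(X;(A,Z)) = I(X;A) + I(X;Z) − I(A;Z)`. -/
lemma key {X A Z : Type*} [Fintype X] [Fintype A] [Fintype Z]
    (q : X → A → Z → ℝ) (h0 : ∀ x a z, 0 ≤ q x a z)
    (hM : ∀ x a z, q x a z * (∑ a', ∑ z', q x a' z')
        = (∑ z', q x a z') * (∑ a', q x a' z)) :
    mutualInfo (fun x (az : A × Z) => q x az.1 az.2)
      = mutualInfo (fun x a => ∑ z, q x a z)
        + mutualInfo (fun x z => ∑ a, q x a z)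
        - mutualInfo (fun a z => ∑ x, q x a z) := by
  unfold mutualInfo
  simp only [Fintype.sum_prod_type]
  have e1 : ∀ x : X, ∑ a, (∑ z, q x a z) *
      Real.log ((∑ z, q x a z) / ((∑ a', ∑ z, q x a' z) * (∑ x', ∑ z, q x' a z)))
      = ∑ a, ∑ z, q x a z *
      Real.log ((∑ z', q x a z') / ((∑ a', ∑ z', q x a' z') * (∑ x', ∑ z', q x' a z'))) := by
    intro x; exact Finset.sum_congr rfl fun a _ => Finset.sum_mul ..
  have e2 : ∀ x : X, ∑ z, (∑ a, q x a z) *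
      Real.log ((∑ a, q x a z) / ((∑ z', ∑ a, q x a z') * (∑ x', ∑ a, q x' a z)))
      = ∑ z, ∑ a, q x a z *
      Real.log ((∑ a', q x a' z) / ((∑ z', ∑ a', q x a' z') * (∑ x', ∑ a', q x' a' z))) := by
    intro x; exact Finset.sum_congr rfl fun z _ => Finset.sum_mul ..
  have e3 : ∀ a : A, ∑ z, (∑ x, q x a z) *
      Real.log ((∑ x, q x a z) / ((∑ z', ∑ x, q x a z') * (∑ a', ∑ x, q x a' z)))
      = ∑ z, ∑ x, q x a z *
      Real.log ((∑ x', q x' a z) / ((∑ z', ∑ x', q x' a z') * (∑ a', ∑ x', q x' a' z))) := by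
    intro a; exact Finset.sum_congr rfl fun z _ => Finset.sum_mul ..
  simp only [e1, e2, e3]
  rw [show (∑ x, ∑ z, ∑ a, q x a z *
      Real.log ((∑ a', q x a' z) / ((∑ z', ∑ a', q x a' z') * (∑ x', ∑ a', q x' a' z))))
      = ∑ x, ∑ a, ∑ z, q x a z *
      Real.log ((∑ a', q x a' z) / ((∑ z', ∑ a', q x a' z') * (∑ x', ∑ a', q x' a' z)))
      from Finset.sum_congr rfl fun x _ => Finset.sum_comm]
  rw [show (∑ a, ∑ z, ∑ x, q x a z *
      Real.log ((∑ x', q x' a z) / ((∑ z', ∑ x', q x' a z') * (∑ a', ∑ x', q x' a' z))))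
      = ∑ x, ∑ a, ∑ z, q x a z *
      Real.log ((∑ x', q x' a z) / ((∑ z', ∑ x', q x' a z') * (∑ a', ∑ x', q x' a' z)))
      from sum_comm3 fun a z x => q x a z *
        Real.log ((∑ x', q x' a z) / ((∑ z', ∑ x', q x' a z') * (∑ a', ∑ x', q x' a' z)))]
  rw [← Finset.sum_add_distrib, ← Finset.sum_sub_distrib]
  refine Finset.sum_congr rfl fun x _ => ?_
  rw [← Finset.sum_add_distrib, ← Finset.sum_sub_distrib]
  refine Finset.sum_congr rfl fun a _ => ?_
  rw [← Finset.sum_add_distrib, ← Finset.sum_sub_distrib]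
  refine Finset.sum_congr rfl fun z _ => ?_
  rcases eq_or_lt_of_le (h0 x a z) with hq | hq
  · rw [← hq]; ring
  -- positivity of the marginals
  have hxa : 0 < ∑ z', q x a z' :=
    hq.trans_le (Finset.single_le_sum (fun i _ => h0 x a i) (Finset.mem_univ z))
  have hxz : 0 < ∑ a', q x a' z :=
    hq.trans_le (Finset.single_le_sum (fun i _ => h0 x i z) (Finset.mem_univ a))
  have haz : 0 < ∑ x', q x' a z :=
    hq.trans_le (Finset.single_le_sum (fun i _ => h0 i a z) (Finset.mem_univ x))
  have hx : 0 < ∑ a', ∑ z', q x a' z' :=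
    hxa.trans_le (Finset.single_le_sum
      (fun i _ => Finset.sum_nonneg fun j _ => h0 x i j) (Finset.mem_univ a))
  have ha : 0 < ∑ x', ∑ z', q x' a z' :=
    hxa.trans_le (Finset.single_le_sum
      (fun i _ => Finset.sum_nonneg fun j _ => h0 i a j) (Finset.mem_univ x))
  have hz : 0 < ∑ x', ∑ a', q x' a' z :=
    hxz.trans_le (Finset.single_le_sum
      (fun i _ => Finset.sum_nonneg fun j _ => h0 i j z) (Finset.mem_univ x))
  -- normalize the sum orders in the marginals
  rw [show (∑ z', ∑ a', q x a' z') = ∑ a', ∑ z', q x a' z' from Finset.sum_comm,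
    show (∑ z', ∑ x', q x' a z') = ∑ x', ∑ z', q x' a z' from Finset.sum_comm,
    show (∑ a', ∑ x', q x' a' z) = ∑ x', ∑ a', q x' a' z from Finset.sum_comm]
  rw [log_aux hq hxa hxz haz hx ha hz (hM x a z)]
  ring

/-- **Theorem 4** (DisenIB is a special case of DisGenIB).
Given the Markov chains `Y ↔ X ↔ Z` and `A ↔ X ↔ Z`,
`I(X;(A,Z)) + I(A;Y) − I(X;A) − I(Y;Z) = I(X;(Y,Z)) + I(A;Y) − I(A;Z) − I(X;Y)`:
the DisGenIB objective with `α = 0`, `β = 1` equals the negative DisenIB objective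
up to subtracting the constant `I(X;Y)`. -/
theorem disGenIB_eq_neg_disenIB
    {X Y A Z : Type*} [Fintype X] [Fintype Y] [Fintype A] [Fintype Z]
    [Nonempty X] [Nonempty Y] [Nonempty A] [Nonempty Z]
    (p : X → Y → A → Z → ℝ)
    (hp0 : ∀ x y a z, 0 ≤ p x y a z)
    (hp1 : ∑ x, ∑ y, ∑ a, ∑ z, p x y a z = 1)
    -- Markov chain `Y ↔ X ↔ Z`, i.e. `p(x,y,z)·p(x) = p(x,y)·p(x,z)`:
    (hMarkovYXZ : ∀ x y z,
      (∑ a, p x y a z) * (∑ y', ∑ a, ∑ z', p x y' a z')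
        = (∑ a, ∑ z', p x y a z') * (∑ y', ∑ a, p x y' a z))
    -- Markov chain `A ↔ X ↔ Z`, i.e. `p(x,a,z)·p(x) = p(x,a)·p(x,z)`:
    (hMarkovAXZ : ∀ x a z,
      (∑ y, p x y a z) * (∑ y, ∑ a', ∑ z', p x y a' z')
        = (∑ y, ∑ z', p x y a z') * (∑ y, ∑ a', p x y a' z)) :
    mutualInfo (fun x (az : A × Z) => ∑ y, p x y az.1 az.2)
        + mutualInfo (fun a y => ∑ x, ∑ z, p x y a z)
        - mutualInfo (fun x a => ∑ y, ∑ z, p x y a z)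
        - mutualInfo (fun y z => ∑ x, ∑ a, p x y a z)
      = mutualInfo (fun x (yz : Y × Z) => ∑ a, p x yz.1 a yz.2)
        + mutualInfo (fun a y => ∑ x, ∑ z, p x y a z)
        - mutualInfo (fun a z => ∑ x, ∑ y, p x y a z)
        - mutualInfo (fun x y => ∑ a, ∑ z, p x y a z) := by
  have hMA : ∀ x a z, (∑ y, p x y a z) * (∑ a', ∑ z', ∑ y, p x y a' z')
      = (∑ z', ∑ y, p x y a z') * (∑ a', ∑ y, p x y a' z) := by
    intro x a z
    rw [show (∑ a', ∑ z', ∑ y, p x y a' z') = ∑ y, ∑ a', ∑ z', p x y a' z'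
        from sum_comm3 fun a' z' y => p x y a' z',
      show (∑ z', ∑ y, p x y a z') = ∑ y, ∑ z', p x y a z' from Finset.sum_comm,
      show (∑ a', ∑ y, p x y a' z) = ∑ y, ∑ a', p x y a' z from Finset.sum_comm]
    exact hMarkovAXZ x a z
  have hMY : ∀ x y z, (∑ a, p x y a z) * (∑ y', ∑ z', ∑ a, p x y' a z')
      = (∑ z', ∑ a, p x y a z') * (∑ y', ∑ a, p x y' a z) := by
    intro x y z
    rw [show (∑ y', ∑ z', ∑ a, p x y' a z') = ∑ y', ∑ a, ∑ z', p x y' a z'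
        from Finset.sum_congr rfl fun y' _ => Finset.sum_comm,
      show (∑ z', ∑ a, p x y a z') = ∑ a, ∑ z', p x y a z' from Finset.sum_comm]
    exact hMarkovYXZ x y z
  have kA := key (fun x a z => ∑ y, p x y a z)
    (fun x a z => Finset.sum_nonneg fun y _ => hp0 x y a z) hMA
  have kY := key (fun x y z => ∑ a, p x y a z)
    (fun x y z => Finset.sum_nonneg fun a _ => hp0 x y a z) hMY
  rw [kA, kY,
    show mutualInfo (fun x a => ∑ z, ∑ y, p x y a z)
        = mutualInfo (fun x a => ∑ y, ∑ z, p x y a z)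
      from mutualInfo_congr fun x a => Finset.sum_comm,
    show mutualInfo (fun x y => ∑ z, ∑ a, p x y a z)
        = mutualInfo (fun x y => ∑ a, ∑ z, p x y a z)
      from mutualInfo_congr fun x y => Finset.sum_comm,
    show mutualInfo (fun x z => ∑ a, ∑ y, p x y a z)
        = mutualInfo (fun x z => ∑ y, ∑ a, p x y a z)
      from mutualInfo_congr fun x z => Finset.sum_comm]
  ring
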